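/- Let G be the join of an edgeless graph on j ≥ 1 vertices with a complete graph on m vertices (i.e., a complete split graph: m universal vertices all mutually adjacent and adjacent to j pairwise non-adjacent vertices). Then the number of moral acyclic orientations of G equals (j·m + 1)·m!. -/

import Mathlib

/-- A chord of a closed walk: an edge of `G` between two vertices of the walk
that is not an edge of the walk. -/
def SimpleGraph.Walk.HasChord {V : Type*} {G : SimpleGraph V} {v : V}
    (c : G.Walk v v) : Prop :=
  ∃ a b, a ∈ c.support ∧ b ∈ c.support ∧ G.Adj a b ∧ s(a, b) ∉ c.edges

/-- A graph is chordal if every cycle with four or more vertices has a chord. -/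
def SimpleGraph.IsChordalGraph {V : Type*} (G : SimpleGraph V) : Prop :=
  ∀ (v : V) (c : G.Walk v v), c.IsCycle → 4 ≤ c.length → c.HasChord

/-- A vertex is dominating if it is adjacent to every other vertex. -/
def SimpleGraph.IsDominatingVertex {V : Type*} (G : SimpleGraph V) (v : V) : Prop :=
  ∀ w, w ≠ v → G.Adj v w

/-- `D` is an orientation of `G`: each edge gets exactly one direction. -/
def SimpleGraph.IsOrientation {V : Type*} (G : SimpleGraph V) (D : V → V → Prop) : Prop :=
  (∀ a b, G.Adj a b ↔ (D a b ∨ D b a)) ∧ ∀ a b, ¬(D a b ∧ D b a)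

/-- An orientation (directed relation) is acyclic if it has no directed cycle. -/
def IsAcyclicRel {V : Type*} (D : V → V → Prop) : Prop :=
  ∀ a, ¬ Relation.TransGen D a a

/-- An orientation is moral (w.r.t. `G`) if it contains no v-structure. -/
def SimpleGraph.IsMoralOrient {V : Type*} (G : SimpleGraph V) (D : V → V → Prop) : Prop :=
  ∀ a b c, D a c → D b c → a ≠ b → G.Adj a b

/-- The number of moral acyclic orientations of `G`. -/
noncomputable def moralAcyclicCount {V : Type*} (G : SimpleGraph V) : ℕ :=
  Set.ncard {D : V → V → Prop |
    G.IsOrientation D ∧ IsAcyclicRel D ∧ G.IsMoralOrient D}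

/-- Join of two graphs: all edges of each plus all edges across. -/
def joinGraph {V1 V2 : Type*} (G1 : SimpleGraph V1) (G2 : SimpleGraph V2) :
    SimpleGraph (V1 ⊕ V2) where
  Adj x y := match x, y with
    | .inl a, .inl b => G1.Adj a b
    | .inr a, .inr b => G2.Adj a b
    | .inl _, .inr _ => True
    | .inr _, .inl _ => True
  symm := ⟨by rintro (a | a) (b | b) h <;> simp_all [SimpleGraph.adj_comm]⟩
  loopless := ⟨by rintro (a | a) h <;> simp_all⟩

/-- Disjoint union of two graphs. -/
def sumGraph {V1 V2 : Type*} (G1 : SimpleGraph V1) (G2 : SimpleGraph V2) :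
    SimpleGraph (V1 ⊕ V2) where
  Adj x y := match x, y with
    | .inl a, .inl b => G1.Adj a b
    | .inr a, .inr b => G2.Adj a b
    | _, _ => False
  symm := ⟨by rintro (a | a) (b | b) h <;> simp_all [SimpleGraph.adj_comm]⟩
  loopless := ⟨by rintro (a | a) h <;> simp_all⟩

namespace CSP
open Finset Relation
open scoped Classical

variable {j m : ℕ}

abbrev csG (j m : ℕ) : SimpleGraph (Fin j ⊕ Fin m) :=
  joinGraph (⊥ : SimpleGraph (Fin j)) (⊤ : SimpleGraph (Fin m))

lemma adj_ll (v w : Fin j) : ¬ (csG j m).Adj (.inl v) (.inl w) := by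
  simp [csG, joinGraph]

lemma adj_lr (v : Fin j) (r : Fin m) : (csG j m).Adj (.inl v) (.inr r) := trivial

lemma adj_rl (r : Fin m) (v : Fin j) : (csG j m).Adj (.inr r) (.inl v) := trivial

lemma adj_rr {r r' : Fin m} : (csG j m).Adj (.inr r) (.inr r') ↔ r ≠ r' := by
  simp [csG, joinGraph]

/-- A position function: left vertex `v` sits at odd position `2 f v + 1`,
right vertex `r` at even position `2 ρ r + 2`. -/
def pos (f : Fin j → Fin (m + 1)) (ρ : Fin m → Fin m) : Fin j ⊕ Fin m → ℕ
  | .inl v => 2 * (f v : ℕ) + 1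
  | .inr r => 2 * (ρ r : ℕ) + 2

/-- The orientation determined by the position data. -/
def Phi (f : Fin j → Fin (m + 1)) (ρ : Fin m → Fin m) :
    Fin j ⊕ Fin m → Fin j ⊕ Fin m → Prop :=
  fun a b => (csG j m).Adj a b ∧ pos f ρ a < pos f ρ b

/-- The "at most one non-maximal value" condition on the left data. -/
def Cond (f : Fin j → Fin (m + 1)) : Prop :=
  ∀ v w, f v ≠ Fin.last m → f w ≠ Fin.last m → v = w

lemma card_filter_lt (ρ : Fin m → Fin m) (hρ : Function.Injective ρ) {t : ℕ} (ht : t ≤ m) :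
    (univ.filter fun r => (ρ r : ℕ) < t).card = t := by
  classical
  have hbij : Function.Bijective ρ := (Finite.injective_iff_bijective).mp hρ
  have e1 : {r : Fin m // (ρ r : ℕ) < t} ≃ {k : Fin m // (k : ℕ) < t} :=
    (Equiv.ofBijective ρ hbij).subtypeEquiv (fun a => Iff.rfl)
  have e2 : {k : Fin m // (k : ℕ) < t} ≃ Fin t :=
    { toFun := fun k => ⟨(k.1 : ℕ), k.2⟩
      invFun := fun i => ⟨⟨(i : ℕ), lt_of_lt_of_le i.2 ht⟩, i.2⟩
      left_inv := fun k => by ext; rfl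
      right_inv := fun i => rfl }
  have := Fintype.card_congr (e1.trans e2)
  rwa [Fintype.card_subtype, Fintype.card_fin] at this

lemma pos_lt_iff_lr (f : Fin j → Fin (m + 1)) (ρ : Fin m → Fin m) (v : Fin j) (r : Fin m) :
    (pos f ρ (.inl v) < pos f ρ (.inr r)) ↔ (f v : ℕ) ≤ (ρ r : ℕ) := by
  simp only [pos]; omega

lemma pos_lt_iff_rl (f : Fin j → Fin (m + 1)) (ρ : Fin m → Fin m) (v : Fin j) (r : Fin m) :
    (pos f ρ (.inr r) < pos f ρ (.inl v)) ↔ (ρ r : ℕ) < (f v : ℕ) := by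
  simp only [pos]; omega

lemma Phi_mem (f : Fin j → Fin (m + 1)) (ρ : Fin m → Fin m) (hρ : Function.Injective ρ)
    (hf : Cond f) :
    (csG j m).IsOrientation (Phi f ρ) ∧ IsAcyclicRel (Phi f ρ) ∧
      (csG j m).IsMoralOrient (Phi f ρ) := by
  have hne : ∀ a b, (csG j m).Adj a b → pos f ρ a ≠ pos f ρ b := by
    rintro (v | r) (w | r') hadj
    · exact absurd hadj (adj_ll v w)
    · simp only [pos]; omega
    · simp only [pos]; omega
    · have : r ≠ r' := adj_rr.mp hadj
      have : ρ r ≠ ρ r' := fun h => this (hρ h)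
      have : (ρ r : ℕ) ≠ (ρ r' : ℕ) := fun h => this (Fin.val_injective h)
      simp only [pos]; omega
  refine ⟨⟨?_, ?_⟩, ?_, ?_⟩
  · intro a b
    constructor
    · intro hadj
      rcases lt_or_gt_of_ne (hne a b hadj) with h | h
      · exact Or.inl ⟨hadj, h⟩
      · exact Or.inr ⟨hadj.symm, h⟩
    · rintro (⟨h, _⟩ | ⟨h, _⟩)
      · exact h
      · exact h.symm
  · rintro a b ⟨⟨_, h1⟩, _, h2⟩; omega
  · intro a h
    have key : ∀ a b, Relation.TransGen (Phi f ρ) a b → pos f ρ a < pos f ρ b := by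
      intro a b h
      induction h with
      | single h => exact h.2
      | tail _ h ih => exact ih.trans h.2
    exact absurd (key a a h) (lt_irrefl _)
  · rintro (v | r) (w | r') (u | r'') ⟨hac, hposac⟩ ⟨hbc, hposbc⟩ hab
    · exact absurd hac (adj_ll v u)
    · -- both left, common child right: use Cond
      exfalso
      rw [pos_lt_iff_lr] at hposac hposbc
      have hr : (ρ r'' : ℕ) < m := (ρ r'').2
      have hv : f v ≠ Fin.last m := by
        intro h; rw [h] at hposac; simp [Fin.val_last] at hposac; omega
      have hw : f w ≠ Fin.last m := by
        intro h; rw [h] at hposbc; simp [Fin.val_last] at hposbc; omega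
      exact hab (congrArg Sum.inl (hf v w hv hw))
    · exact adj_lr v r'
    · exact adj_lr v r'
    · exact adj_rl r w
    · exact adj_rl r w
    · exact adj_rr.mpr (fun h => hab (congrArg Sum.inr h))
    · exact adj_rr.mpr (fun h => hab (congrArg Sum.inr h))

lemma Phi_rank (f : Fin j → Fin (m + 1)) (ρ : Fin m → Fin m) (hρ : Function.Injective ρ)
    (r : Fin m) :
    (univ.filter fun r' => Phi f ρ (.inr r') (.inr r)).card = (ρ r : ℕ) := by
  have hpred : ∀ r' : Fin m, Phi f ρ (.inr r') (.inr r) ↔ (ρ r' : ℕ) < (ρ r : ℕ) := by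
    intro r'
    constructor
    · rintro ⟨_, hp⟩; simp only [pos] at hp; omega
    · intro h
      refine ⟨adj_rr.mpr fun he => ?_, by simp only [pos]; omega⟩
      subst he; omega
  rw [filter_congr (fun r' _ => by rw [hpred])]
  exact card_filter_lt ρ hρ (le_of_lt (ρ r).2)

lemma Phi_indeg (f : Fin j → Fin (m + 1)) (ρ : Fin m → Fin m) (hρ : Function.Injective ρ)
    (v : Fin j) :
    (univ.filter fun r => Phi f ρ (.inr r) (.inl v)).card = (f v : ℕ) := by
  have hpred : ∀ r : Fin m, Phi f ρ (.inr r) (.inl v) ↔ (ρ r : ℕ) < (f v : ℕ) := by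
    intro r
    constructor
    · rintro ⟨_, hp⟩; simp only [pos] at hp; omega
    · intro h
      exact ⟨adj_rl r v, by simp only [pos]; omega⟩
  rw [filter_congr (fun r _ => by rw [hpred])]
  exact card_filter_lt ρ hρ (by have := (f v).2; omega)

lemma Phi_injective (f f' : Fin j → Fin (m + 1)) (ρ ρ' : Fin m → Fin m)
    (hρ : Function.Injective ρ) (hρ' : Function.Injective ρ')
    (h : Phi f ρ = Phi f' ρ') : f = f' ∧ ρ = ρ' := by
  constructor
  · funext v
    have h1 := Phi_indeg f ρ hρ v
    have h2 := Phi_indeg f' ρ' hρ' v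
    rw [h] at h1
    exact Fin.val_injective (h1 ▸ h2 ▸ rfl)
  · funext r
    have h1 := Phi_rank f ρ hρ r
    have h2 := Phi_rank f' ρ' hρ' r
    rw [h] at h1
    exact Fin.val_injective (h1 ▸ h2 ▸ rfl)

lemma exists_rep (D : Fin j ⊕ Fin m → Fin j ⊕ Fin m → Prop)
    (hOr : (csG j m).IsOrientation D) (hAc : IsAcyclicRel D)
    (hMo : (csG j m).IsMoralOrient D) :
    ∃ (f : Fin j → Fin (m + 1)) (ρ : Fin m → Fin m),
      Cond f ∧ Function.Injective ρ ∧ Phi f ρ = D := by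
  classical
  have hAsym : ∀ a b, ¬ (D a b ∧ D b a) := hOr.2
  have hDadj : ∀ a b, D a b → (csG j m).Adj a b := fun a b h => (hOr.1 a b).mpr (Or.inl h)
  set E : Fin m → Fin m → Prop := fun r r' => D (.inr r) (.inr r') with hE
  have hEirr : ∀ r, ¬ E r r := fun r h => hAsym _ _ ⟨h, h⟩
  have hEtot : ∀ r r', r ≠ r' → E r r' ∨ E r' r := fun r r' h =>
    (hOr.1 _ _).mp (adj_rr.mpr h)
  have hEtrans : ∀ {a b c}, E a b → E b c → E a c := by
    intro a b c h1 h2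
    have hac : a ≠ c := by rintro rfl; exact hAsym _ _ ⟨h2, h1⟩
    rcases hEtot a c hac with h | h
    · exact h
    · exfalso
      apply hAc (Sum.inr a)
      have s1 : D (.inr a) (.inr b) := h1
      have s2 : D (.inr b) (.inr c) := h2
      have s3 : D (.inr c) (.inr a) := h
      exact ((Relation.TransGen.single s1).tail s2).tail s3
  set rk : Fin m → ℕ := fun r => (univ.filter fun r' => E r' r).card with hrk
  have hrklt : ∀ r, rk r < m := by
    intro r
    have hne : (univ.filter fun r' => E r' r) ≠ univ := by
      intro hu
      have : r ∈ univ.filter fun r' => E r' r := by rw [hu]; exact mem_univ r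
      exact hEirr r (mem_filter.mp this).2
    calc rk r < univ.card := Finset.card_lt_card (Finset.ssubset_univ_iff.mpr hne)
    _ = m := by simp
  have hrkmono : ∀ {r r'}, E r r' → rk r < rk r' := by
    intro r r' h
    have hsub : insert r (univ.filter fun x => E x r) ⊆ univ.filter fun x => E x r' := by
      intro x hx
      rcases Finset.mem_insert.mp hx with rfl | hx
      · exact mem_filter.mpr ⟨mem_univ _, h⟩
      · exact mem_filter.mpr ⟨mem_univ _, hEtrans (mem_filter.mp hx).2 h⟩
    have hle := Finset.card_le_card hsub
    have hins := Finset.card_insert_of_notMem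
      (s := univ.filter fun x => E x r) (a := r) (fun hx => hEirr r (mem_filter.mp hx).2)
    show (univ.filter fun x => E x r).card < (univ.filter fun x => E x r').card
    omega
  set ρ : Fin m → Fin m := fun r => ⟨rk r, hrklt r⟩ with hρdef
  have hρinj : Function.Injective ρ := by
    intro r r' h
    by_contra hne
    have hv : rk r = rk r' := congrArg Fin.val h
    rcases hEtot r r' hne with h' | h' <;> exact absurd (hrkmono h') (by omega)
  set In : Fin j → Finset (Fin m) := fun v => univ.filter fun r => D (.inr r) (.inl v)
    with hIn
  have hInm : ∀ v, (In v).card ≤ m := by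
    intro v
    calc (In v).card ≤ univ.card := Finset.card_le_card (Finset.subset_univ _)
    _ = m := by simp
  set f : Fin j → Fin (m + 1) := fun v => ⟨(In v).card, Nat.lt_succ_of_le (hInm v)⟩
    with hfdef
  have hdc : ∀ v r r'', r ∈ In v → E r'' r → r'' ∈ In v := by
    intro v r r'' hr h
    by_contra hr''
    have h1 : D (.inl v) (.inr r'') := by
      rcases (hOr.1 _ _).mp (adj_lr v r'') with h1 | h1
      · exact h1
      · exact absurd (show r'' ∈ In v from mem_filter.mpr ⟨mem_univ _, h1⟩) hr''
    exact hAc _ (((Relation.TransGen.single h1).tail h).tail (mem_filter.mp hr).2)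
  have hcond : Cond f := by
    intro v w hv hw
    by_contra hvw
    have hex : ∀ u : Fin j, f u ≠ Fin.last m → ∃ r, r ∉ In u := by
      intro u hu
      by_contra hno
      push_neg at hno
      apply hu
      have huniv : In u = univ := Finset.eq_univ_iff_forall.mpr hno
      apply Fin.ext
      simp [hfdef, huniv, Fin.val_last]
    obtain ⟨rv, hrv⟩ := hex v hv
    obtain ⟨rw, hrw⟩ := hex w hw
    have hup : ∀ u r r', r ∉ In u → E r r' → r' ∉ In u :=
      fun u r r' h1 h2 h3 => h1 (hdc u r' r h3 h2)
    obtain ⟨r0, h0v, h0w⟩ : ∃ r0, r0 ∉ In v ∧ r0 ∉ In w := by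
      rcases eq_or_ne rv rw with rfl | hne
      · exact ⟨rv, hrv, hrw⟩
      rcases hEtot rv rw hne with h | h
      · exact ⟨rw, hup v rv rw hrv h, hrw⟩
      · exact ⟨rv, hrv, hup w rw rv hrw h⟩
    have hDv : D (.inl v) (.inr r0) := by
      rcases (hOr.1 _ _).mp (adj_lr v r0) with h1 | h1
      · exact h1
      · exact absurd (show r0 ∈ In v from mem_filter.mpr ⟨mem_univ _, h1⟩) h0v
    have hDw : D (.inl w) (.inr r0) := by
      rcases (hOr.1 _ _).mp (adj_lr w r0) with h1 | h1
      · exact h1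
      · exact absurd (show r0 ∈ In w from mem_filter.mpr ⟨mem_univ _, h1⟩) h0w
    exact adj_ll v w (hMo _ _ _ hDv hDw (fun h => hvw (Sum.inl.inj h)))
  have hub : ∀ a b, D a b → pos f ρ a < pos f ρ b := by
    rintro (v | r) (w | r') h
    · exact absurd (hDadj _ _ h) (adj_ll v w)
    · have hsub : In v ⊆ univ.filter fun x => E x r' := by
        intro x hx
        have hxv : D (.inr x) (.inl v) := (mem_filter.mp hx).2
        have hxr : x ≠ r' := by
          rintro rfl
          exact hAsym _ _ ⟨h, hxv⟩
        rcases hEtot x r' hxr with h' | h'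
        · exact mem_filter.mpr ⟨mem_univ _, h'⟩
        · exact absurd (((Relation.TransGen.single h).tail h').tail hxv) (hAc _)
      have hle := Finset.card_le_card hsub
      have key : rk r' = (univ.filter fun x => E x r').card := rfl
      have kρ : ((ρ r' : Fin m) : ℕ) = rk r' := rfl
      have kf : ((f v : Fin (m + 1)) : ℕ) = (In v).card := rfl
      simp only [pos]
      omega
    · have hr : r ∈ In w := mem_filter.mpr ⟨mem_univ _, h⟩
      have hsub : insert r (univ.filter fun x => E x r) ⊆ In w := by
        intro x hx
        rcases Finset.mem_insert.mp hx with rfl | hx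
        · exact hr
        · exact hdc w r x hr (mem_filter.mp hx).2
      have hle := Finset.card_le_card hsub
      have hins := Finset.card_insert_of_notMem
        (s := univ.filter fun x => E x r) (a := r) (fun hx => hEirr r (mem_filter.mp hx).2)
      have key : rk r = (univ.filter fun x => E x r).card := rfl
      have kρ : ((ρ r : Fin m) : ℕ) = rk r := rfl
      have kf : ((f w : Fin (m + 1)) : ℕ) = (In w).card := rfl
      simp only [pos]
      omega
    · have key : rk r < rk r' := hrkmono (h : E r r')
      have kρ : ((ρ r : Fin m) : ℕ) = rk r := rfl
      have kρ' : ((ρ r' : Fin m) : ℕ) = rk r' := rfl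
      simp only [pos]
      omega
  refine ⟨f, ρ, hcond, hρinj, ?_⟩
  funext a b
  apply propext
  constructor
  · rintro ⟨hadj, hlt⟩
    rcases (hOr.1 a b).mp hadj with h | h
    · exact h
    · exact absurd (hub b a h) (by omega)
  · intro h
    exact ⟨hDadj a b h, hub a b h⟩

lemma card_cond : Nat.card {f : Fin j → Fin (m + 1) // Cond f} = j * m + 1 := by
  classical
  have hlast : ∀ k : Fin m, k.castSucc ≠ Fin.last m := fun k => (Fin.castSucc_lt_last k).ne
  set g : Option (Fin j × Fin m) → {f : Fin j → Fin (m + 1) // Cond f} := fun o =>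
    match o with
    | none => ⟨fun _ => Fin.last m, fun v w hv _ => absurd rfl hv⟩
    | some (v, k) => ⟨Function.update (fun _ => Fin.last m) v k.castSucc, by
        intro v' w' hv' hw'
        have h1 : v' = v := by
          by_contra h
          rw [Function.update_of_ne h] at hv'
          exact hv' rfl
        have h2 : w' = v := by
          by_contra h
          rw [Function.update_of_ne h] at hw'
          exact hw' rfl
        rw [h1, h2]⟩ with hg
  have hbij : Function.Bijective g := by
    constructor
    · rintro (_ | ⟨v, k⟩) (_ | ⟨v', k'⟩) h
      · rfl
      · exfalso
        have := congrFun (congrArg Subtype.val h) v'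
        simp [hg, Function.update_self] at this
        exact hlast k' this.symm
      · exfalso
        have := congrFun (congrArg Subtype.val h) v
        simp [hg, Function.update_self] at this
      · have hvv : v = v' := by
          by_contra hne
          have := congrFun (congrArg Subtype.val h) v
          rw [hg] at this
          simp only [Function.update_self, Function.update_of_ne hne] at this
          exact hlast k this
        subst hvv
        have := congrFun (congrArg Subtype.val h) v
        rw [hg] at this
        simp only [Function.update_self] at this
        rw [Fin.castSucc_inj.mp this]
    · rintro ⟨f, hf⟩
      by_cases h : ∀ v, f v = Fin.last m
      · exact ⟨none, Subtype.ext (funext fun v => (h v).symm)⟩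
      · push_neg at h
        obtain ⟨v, hv⟩ := h
        obtain ⟨k, hk⟩ := Fin.exists_castSucc_eq.mpr hv
        refine ⟨some (v, k), Subtype.ext (funext fun w => ?_)⟩
        rcases eq_or_ne w v with rfl | hne
        · simp [hg, Function.update_self, hk]
        · have : f w = Fin.last m := by
            by_contra hw
            exact hne (hf w v hw hv)
          simp [hg, Function.update_of_ne hne, this]
  calc Nat.card {f : Fin j → Fin (m + 1) // Cond f}
      = Nat.card (Option (Fin j × Fin m)) := (Nat.card_congr (Equiv.ofBijective g hbij)).symm
    _ = j * m + 1 := by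
        rw [Nat.card_eq_fintype_card]
        simp [Fintype.card_option]

end CSP

theorem count_complete_split (j m : ℕ) (hj : 1 ≤ j) :
    moralAcyclicCount (joinGraph (⊥ : SimpleGraph (Fin j)) (⊤ : SimpleGraph (Fin m)))
      = (j * m + 1) * Nat.factorial m := by
  classical
  rw [moralAcyclicCount]
  set Ψ : ({f : Fin j → Fin (m + 1) // CSP.Cond f} × (Fin m ↪ Fin m)) →
      ((Fin j ⊕ Fin m) → (Fin j ⊕ Fin m) → Prop) := fun p => CSP.Phi p.1.1 p.2 with hΨ
  have hinj : Function.Injective Ψ := by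
    rintro ⟨⟨f, hf⟩, ρ⟩ ⟨⟨f', hf'⟩, ρ'⟩ h
    obtain ⟨h1, h2⟩ := CSP.Phi_injective f f' ρ ρ' ρ.injective ρ'.injective h
    simp only [Prod.mk.injEq, Subtype.mk.injEq]
    exact ⟨h1, DFunLike.coe_injective h2⟩
  have hrange : Set.range Ψ = {D : (Fin j ⊕ Fin m) → (Fin j ⊕ Fin m) → Prop |
      (joinGraph (⊥ : SimpleGraph (Fin j)) (⊤ : SimpleGraph (Fin m))).IsOrientation D ∧
        IsAcyclicRel D ∧
        (joinGraph (⊥ : SimpleGraph (Fin j)) (⊤ : SimpleGraph (Fin m))).IsMoralOrient D} := by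
    ext D
    simp only [Set.mem_setOf_eq, Set.mem_range]
    constructor
    · rintro ⟨⟨⟨f, hf⟩, ρ⟩, rfl⟩
      exact CSP.Phi_mem f ρ ρ.injective hf
    · rintro ⟨hOr, hAc, hMo⟩
      obtain ⟨f, ρ, hf, hρ, hPhi⟩ := CSP.exists_rep D hOr hAc hMo
      exact ⟨⟨⟨f, hf⟩, ⟨ρ, hρ⟩⟩, hPhi⟩
  rw [← hrange, ← Set.image_univ, Set.ncard_image_of_injective _ hinj, Set.ncard_univ,
    Nat.card_prod, CSP.card_cond, Nat.card_eq_fintype_card, Fintype.card_embedding_eq,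
    Fintype.card_fin, Nat.descFactorial_self]
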